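/- (Leonard system, local three-term relation.) Suppose the tridiagonal system is a Leonard system (all eigenspaces one-dimensional) with tridiagonal-relation scalars \beta, \gamma, \varrho. Then for 2 \le i \le d: g^-_i a_{i-2} + a_{i-1} + g^+_i a_i = \gamma, where g^+_i = (\theta^*_i-\theta^*_{i+1})/(\theta^*_i-\theta^*_{i-2}), g^-_i = (\theta^*_{i-2}-\theta^*_{i-3})/(\theta^*_{i-2}-\theta^*_i), and a_k is defined by E^*_kAE^*_k = a_kE^*_k. -/

import Mathlib

/-- A tridiagonal system `(A; {E_i}; A*; {E*_i})` of diameter `d` on `V`: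
`A, A*` are diagonalizable with primitive idempotents `E_i`, `E*_i` (in standard
orderings, so that the tridiagonal conditions hold), mutually distinct eigenvalues
`θ_i`, `θ*_i`, and no nontrivial proper subspace of `V` is invariant under both. -/
structure TDSystem (F V : Type*) [Field F] [AddCommGroup V] [Module F V] (d : ℕ) where
  A : Module.End F V
  As : Module.End F V
  E : ℕ → Module.End F V
  Es : ℕ → Module.End F V
  θ : ℕ → F
  θs : ℕ → F
  hEE : ∀ i ≤ d, ∀ j ≤ d, E i * E j = if i = j then E i else 0
  hEsEs : ∀ i ≤ d, ∀ j ≤ d, Es i * Es j = if i = j then Es i else 0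
  hEsum : ∑ i ∈ Finset.range (d + 1), E i = 1
  hEssum : ∑ i ∈ Finset.range (d + 1), Es i = 1
  hEne : ∀ i ≤ d, E i ≠ 0
  hEsne : ∀ i ≤ d, Es i ≠ 0
  hA : A = ∑ i ∈ Finset.range (d + 1), θ i • E i
  hAs : As = ∑ i ∈ Finset.range (d + 1), θs i • Es i
  hθ : ∀ i ≤ d, ∀ j ≤ d, i ≠ j → θ i ≠ θ j
  hθs : ∀ i ≤ d, ∀ j ≤ d, i ≠ j → θs i ≠ θs j
  htri : ∀ i ≤ d, ∀ j ≤ d, (i + 1 < j ∨ j + 1 < i) → Es i * A * Es j = 0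
  htris : ∀ i ≤ d, ∀ j ≤ d, (i + 1 < j ∨ j + 1 < i) → E i * As * E j = 0
  hirr : ∀ W : Submodule F V, (∀ v ∈ W, A v ∈ W) → (∀ v ∈ W, As v ∈ W) → W = ⊥ ∨ W = ⊤

namespace TDSystem
variable {F V : Type*} [Field F] [AddCommGroup V] [Module F V] {d : ℕ} (Φ : TDSystem F V d)

lemma es_idem {m : ℕ} (hm : m ≤ d) : Φ.Es m * Φ.Es m = Φ.Es m := by
  simpa using Φ.hEsEs m hm m hm

lemma as_mul_es {n : ℕ} (hn : n ≤ d) : Φ.As * Φ.Es n = Φ.θs n • Φ.Es n := by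
  rw [Φ.hAs, Finset.sum_mul, Finset.sum_eq_single n]
  · rw [smul_mul_assoc, Φ.hEsEs n hn n hn, if_pos rfl]
  · intro m hm hmn
    rw [smul_mul_assoc, Φ.hEsEs m (Nat.lt_succ_iff.mp (Finset.mem_range.mp hm)) n hn,
      if_neg hmn, smul_zero]
  · intro h; exact absurd (Finset.mem_range.mpr (Nat.lt_succ_of_le hn)) h

lemma es_mul_as {n : ℕ} (hn : n ≤ d) : Φ.Es n * Φ.As = Φ.θs n • Φ.Es n := by
  rw [Φ.hAs, Finset.mul_sum, Finset.sum_eq_single n]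
  · rw [mul_smul_comm, Φ.hEsEs n hn n hn, if_pos rfl]
  · intro m hm hmn
    rw [mul_smul_comm, Φ.hEsEs n hn m (Nat.lt_succ_iff.mp (Finset.mem_range.mp hm)),
      if_neg (Ne.symm hmn), smul_zero]
  · intro h; exact absurd (Finset.mem_range.mpr (Nat.lt_succ_of_le hn)) h


lemma super_ne {m : ℕ} (hm : m + 1 ≤ d) : Φ.Es m * Φ.A * Φ.Es (m + 1) ≠ 0 := by
  intro hB0
  set P : Module.End F V := ∑ k ∈ Finset.Ico (m + 1) (d + 1), Φ.Es k with hP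
  have hmem : ∀ k ∈ Finset.Ico (m + 1) (d + 1), k ≤ d := by
    intro k hk; exact Nat.lt_succ_iff.mp (Finset.mem_Ico.mp hk).2
  -- Es l * P = Es l for l in the window
  have hEsP : ∀ l, m + 1 ≤ l → l ≤ d → Φ.Es l * P = Φ.Es l := by
    intro l hl1 hl2
    rw [hP, Finset.mul_sum, Finset.sum_eq_single l]
    · simpa using Φ.hEsEs l hl2 l hl2
    · intro k hk hkl
      rw [Φ.hEsEs l hl2 k (hmem k hk), if_neg (Ne.symm hkl)]
    · intro h; exact absurd (Finset.mem_Ico.mpr ⟨hl1, Nat.lt_succ_of_le hl2⟩) h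
  have hPEs : ∀ l, m + 1 ≤ l → l ≤ d → P * Φ.Es l = Φ.Es l := by
    intro l hl1 hl2
    rw [hP, Finset.sum_mul, Finset.sum_eq_single l]
    · simpa using Φ.hEsEs l hl2 l hl2
    · intro k hk hkl
      rw [Φ.hEsEs k (hmem k hk) l hl2, if_neg hkl]
    · intro h; exact absurd (Finset.mem_Ico.mpr ⟨hl1, Nat.lt_succ_of_le hl2⟩) h
  have hE0P : Φ.Es 0 * P = 0 := by
    rw [hP, Finset.mul_sum]
    refine Finset.sum_eq_zero fun k hk => ?_
    rw [Φ.hEsEs 0 (Nat.zero_le d) k (hmem k hk),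
      if_neg (by have := (Finset.mem_Ico.mp hk).1; omega)]
  -- As commutes with P
  have hAsP : Φ.As * P = P * Φ.As := by
    rw [hP, Finset.mul_sum, Finset.sum_mul]
    refine Finset.sum_congr rfl fun k hk => ?_
    rw [Φ.as_mul_es (hmem k hk), Φ.es_mul_as (hmem k hk)]
  -- (1 - P) kills A * P from the left
  have hsplit : (∑ k ∈ Finset.Ico 0 (m + 1), Φ.Es k) + P = 1 := by
    rw [hP, Finset.sum_Ico_consecutive _ (Nat.zero_le (m + 1)) (by omega)]
    rw [← Finset.range_eq_Ico]; exact Φ.hEssum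
  have hP0AP : (∑ k ∈ Finset.Ico 0 (m + 1), Φ.Es k) * (Φ.A * P) = 0 := by
    rw [← mul_assoc, Finset.sum_mul, Finset.sum_mul]
    refine Finset.sum_eq_zero fun k hk => ?_
    rw [hP, Finset.mul_sum]
    refine Finset.sum_eq_zero fun l hl => ?_
    have hk1 : k ≤ m := by have := (Finset.mem_Ico.mp hk).2; omega
    have hl1 : m + 1 ≤ l := (Finset.mem_Ico.mp hl).1
    rcases Nat.lt_or_ge (k + 1) l with h | h
    · exact Φ.htri k (by omega) l (hmem l hl) (Or.inl h)
    · have hkm : k = m := by omega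
      have hlm : l = m + 1 := by omega
      rw [hkm, hlm]; exact hB0
  have hAP : Φ.A * P = P * (Φ.A * P) := by
    conv_lhs => rw [← one_mul (Φ.A * P), ← hsplit, add_mul, hP0AP, zero_add]
  -- range P is invariant
  have hinv1 : ∀ v ∈ LinearMap.range P, Φ.A v ∈ LinearMap.range P := by
    rintro v ⟨u, rfl⟩
    have : Φ.A (P u) = (P * (Φ.A * P)) u := by rw [← hAP]; rfl
    rw [this]
    exact ⟨(Φ.A * P) u, rfl⟩
  have hinv2 : ∀ v ∈ LinearMap.range P, Φ.As v ∈ LinearMap.range P := by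
    rintro v ⟨u, rfl⟩
    have : Φ.As (P u) = (P * Φ.As) u := by rw [← hAsP]; rfl
    rw [this]
    exact ⟨Φ.As u, rfl⟩
  rcases Φ.hirr (LinearMap.range P) hinv1 hinv2 with hbot | htop
  · have h1 : Φ.Es (m + 1) = 0 := by
      ext v
      have : Φ.Es (m + 1) v = P (Φ.Es (m + 1) v) := by
        conv_lhs => rw [← hPEs (m + 1) le_rfl hm]
        rfl
      have hmem2 : Φ.Es (m + 1) v ∈ LinearMap.range P := ⟨Φ.Es (m + 1) v, this.symm⟩
      rw [hbot] at hmem2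
      simpa using hmem2
    exact Φ.hEsne (m + 1) hm h1
  · have h1 : Φ.Es 0 = 0 := by
      ext v
      have hv : v ∈ LinearMap.range P := by rw [htop]; trivial
      obtain ⟨u, hu⟩ := hv
      have : Φ.Es 0 v = (Φ.Es 0 * P) u := by rw [← hu]; rfl
      rw [hE0P] at this
      simpa using this
    exact Φ.hEsne 0 (Nat.zero_le d) h1

lemma comp_ne [FiniteDimensional F V] {j : ℕ} (hj : j + 2 ≤ d)
    (hdimEs : ∀ i ≤ d, Module.finrank F (LinearMap.range (Φ.Es i)) = 1) :
    (Φ.Es j * Φ.A * Φ.Es (j + 1)) * (Φ.Es (j + 1) * Φ.A * Φ.Es (j + 2)) ≠ 0 := by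
  set B1 := Φ.Es j * Φ.A * Φ.Es (j + 1) with hB1def
  set B2 := Φ.Es (j + 1) * Φ.A * Φ.Es (j + 2) with hB2def
  have hB1 : B1 ≠ 0 := Φ.super_ne (by omega)
  have hB2 : B2 ≠ 0 := by
    have := Φ.super_ne (m := j + 1) (by omega)
    simpa using this
  have hle : LinearMap.range B2 ≤ LinearMap.range (Φ.Es (j + 1)) := by
    rintro v ⟨u, rfl⟩
    exact ⟨(Φ.A * Φ.Es (j + 2)) u, by rw [hB2def, mul_assoc]; rfl⟩
  have hrange : LinearMap.range B2 = LinearMap.range (Φ.Es (j + 1)) := by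
    refine Submodule.eq_of_le_of_finrank_le hle ?_
    rw [hdimEs (j + 1) (by omega)]
    have hbot : LinearMap.range B2 ≠ ⊥ := by
      intro h; exact hB2 (LinearMap.range_eq_bot.mp h)
    have : Module.finrank F (LinearMap.range B2) ≠ 0 := fun h =>
      hbot (Submodule.finrank_eq_zero.mp h)
    omega
  obtain ⟨v, hv⟩ : ∃ v, B1 v ≠ 0 := by
    by_contra h
    push_neg at h
    exact hB1 (LinearMap.ext fun v => h v)
  have habs : B1 * Φ.Es (j + 1) = B1 := by
    rw [hB1def, mul_assoc, Φ.es_idem (by omega : j + 1 ≤ d)]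
  have hmem : Φ.Es (j + 1) v ∈ LinearMap.range B2 := by
    rw [hrange]; exact ⟨v, rfl⟩
  obtain ⟨u, hu⟩ := hmem
  intro hQ
  apply hv
  have : B1 (Φ.Es (j + 1) v) = B1 v := by
    have h3 := congrFun (congrArg DFunLike.coe habs) v
    simpa using h3
  have h2 : (B1 * B2) u = B1 v := by
    show B1 (B2 u) = B1 v
    rw [hu, this]
  rw [hQ] at h2
  simpa using h2.symm

section Master
variable (a : ℕ → F)

lemma single_master (ha : ∀ i ≤ d, Φ.Es i * Φ.A * Φ.Es i = a i • Φ.Es i)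
    {j : ℕ} (hj : j + 2 ≤ d) (w : ℕ → F) :
    ∑ m ∈ Finset.range (d + 1),
        w m • (Φ.Es j * (Φ.A * (Φ.Es m * (Φ.A * Φ.Es (j + 2)))))
      = w (j + 1) • (Φ.Es j * (Φ.A * (Φ.Es (j + 1) * (Φ.A * Φ.Es (j + 2))))) := by
  have tri1 : ∀ p q : ℕ, p ≤ d → q ≤ d → (p + 1 < q ∨ q + 1 < p) →
      ∀ X : Module.End F V, Φ.Es p * (Φ.A * (Φ.Es q * X)) = 0 := by
    intro p q hp hq h X
    have h0 := congrArg (· * X) (Φ.htri p hp q hq h)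
    simpa [mul_assoc] using h0
  have tri0 : ∀ p q : ℕ, p ≤ d → q ≤ d → (p + 1 < q ∨ q + 1 < p) →
      Φ.Es p * (Φ.A * Φ.Es q) = 0 := by
    intro p q hp hq h; simpa [mul_assoc] using Φ.htri p hp q hq h
  rw [show (Finset.range (d + 1)) = insert (j+1) ((Finset.range (d+1)).erase (j+1)) from
    (Finset.insert_erase (Finset.mem_range.mpr (by omega))).symm]
  rw [Finset.sum_insert (Finset.notMem_erase _ _)]
  have hz : ∑ m ∈ (Finset.range (d+1)).erase (j+1),
      w m • (Φ.Es j * (Φ.A * (Φ.Es m * (Φ.A * Φ.Es (j + 2))))) = 0 := by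
    refine Finset.sum_eq_zero fun m hm => ?_
    have hmd : m ≤ d := Nat.lt_succ_iff.mp (Finset.mem_range.mp (Finset.mem_erase.mp hm).2)
    have hmne : m ≠ j + 1 := (Finset.mem_erase.mp hm).1
    rcases Nat.lt_or_ge m (j + 1) with h | h
    · rw [tri0 m (j+2) hmd (by omega) (Or.inl (by omega))]
      simp
    · rw [tri1 j m (by omega) hmd (Or.inl (by omega))]
      simp
  rw [hz, add_zero]

lemma double_master (ha : ∀ i ≤ d, Φ.Es i * Φ.A * Φ.Es i = a i • Φ.Es i)
    {j : ℕ} (hj : j + 2 ≤ d) (w : ℕ → ℕ → F) :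
    ∑ m ∈ Finset.range (d + 1), ∑ n ∈ Finset.range (d + 1),
        w m n • (Φ.Es j * (Φ.A * (Φ.Es m * (Φ.A * (Φ.Es n * (Φ.A * Φ.Es (j + 2)))))))
      = (w j (j+1) * a j + w (j+1) (j+1) * a (j+1) + w (j+1) (j+2) * a (j+2)) •
        (Φ.Es j * (Φ.A * (Φ.Es (j+1) * (Φ.A * Φ.Es (j+2))))) := by
  have tri1 : ∀ p q : ℕ, p ≤ d → q ≤ d → (p + 1 < q ∨ q + 1 < p) →
      ∀ X : Module.End F V, Φ.Es p * (Φ.A * (Φ.Es q * X)) = 0 := by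
    intro p q hp hq h X
    have h0 := congrArg (· * X) (Φ.htri p hp q hq h)
    simpa [mul_assoc] using h0
  have tri0 : ∀ p q : ℕ, p ≤ d → q ≤ d → (p + 1 < q ∨ q + 1 < p) →
      Φ.Es p * (Φ.A * Φ.Es q) = 0 := by
    intro p q hp hq h; simpa [mul_assoc] using Φ.htri p hp q hq h
  have diag1 : ∀ p : ℕ, p ≤ d → ∀ X : Module.End F V,
      Φ.Es p * (Φ.A * (Φ.Es p * X)) = a p • (Φ.Es p * X) := by
    intro p hp X
    have h0 := congrArg (· * X) (ha p hp)
    simpa [mul_assoc, smul_mul_assoc] using h0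
  have diag0 : ∀ p : ℕ, p ≤ d → Φ.Es p * (Φ.A * Φ.Es p) = a p • Φ.Es p := by
    intro p hp; simpa [mul_assoc] using ha p hp
  -- collapse the inner sum for each m ∈ {j, j+1}
  have hinner : ∀ m : ℕ, m ≤ d → m ≤ j + 1 →
      ∑ n ∈ Finset.range (d + 1),
        w m n • (Φ.Es j * (Φ.A * (Φ.Es m * (Φ.A * (Φ.Es n * (Φ.A * Φ.Es (j + 2)))))))
      = w m (j+1) • (Φ.Es j * (Φ.A * (Φ.Es m * (Φ.A * (Φ.Es (j+1) * (Φ.A * Φ.Es (j+2)))))))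
      + w m (j+2) • (Φ.Es j * (Φ.A * (Φ.Es m * (Φ.A * (Φ.Es (j+2) * (Φ.A * Φ.Es (j+2))))))) := by
    intro m hmd hmj
    have hsub : ({j+1, j+2} : Finset ℕ) ⊆ Finset.range (d + 1) := by
      intro x hx
      simp only [Finset.mem_insert, Finset.mem_singleton] at hx
      rcases hx with rfl | rfl <;> exact Finset.mem_range.mpr (by omega)
    rw [← Finset.sum_subset hsub]
    · rw [Finset.sum_insert (by simp), Finset.sum_singleton]
    · intro n hn hnmem
      have hnd : n ≤ d := Nat.lt_succ_iff.mp (Finset.mem_range.mp hn)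
      simp only [Finset.mem_insert, Finset.mem_singleton] at hnmem
      push_neg at hnmem
      rcases Nat.lt_or_ge n (j + 1) with h | h
      · rw [tri0 n (j+2) hnd (by omega) (Or.inl (by omega))]
        simp
      · rw [tri1 m n hmd hnd (Or.inl (by omega))]
        simp
  -- collapse the outer sum to {j, j+1}
  have hsub : ({j, j+1} : Finset ℕ) ⊆ Finset.range (d + 1) := by
    intro x hx
    simp only [Finset.mem_insert, Finset.mem_singleton] at hx
    rcases hx with rfl | rfl <;> exact Finset.mem_range.mpr (by omega)
  rw [← Finset.sum_subset hsub]
  · rw [Finset.sum_insert (by simp), Finset.sum_singleton,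
      hinner j (by omega) (by omega), hinner (j+1) (by omega) le_rfl]
    rw [diag1 j (by omega), tri1 j (j+2) (by omega) (by omega) (Or.inl (by omega)),
      diag1 (j+1) (by omega), diag0 (j+2) (by omega)]
    simp only [mul_zero, smul_zero, add_zero, mul_smul_comm, smul_smul]
    module
  · intro m hm hmmem
    have hmd : m ≤ d := Nat.lt_succ_iff.mp (Finset.mem_range.mp hm)
    simp only [Finset.mem_insert, Finset.mem_singleton] at hmmem
    push_neg at hmmem
    obtain ⟨hm1, hm2⟩ := hmmem
    refine Finset.sum_eq_zero fun n hn => ?_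
    have hnd : n ≤ d := Nat.lt_succ_iff.mp (Finset.mem_range.mp hn)
    rcases Nat.lt_or_ge (j + 1) m with h | h
    · rw [tri1 j m (by omega) hmd (Or.inl (by omega))]
      simp
    · -- m < j, so either m+1 < j (kill first factor) or m+1 = j (analyze n)
      have hmlt : m < j := by omega
      rcases Nat.lt_or_ge (m + 1) j with h2 | h2
      · rw [tri1 j m (by omega) hmd (Or.inr (by omega))]
        simp
      · have hmj : m + 1 = j := by omega
        rcases Nat.lt_or_ge n (j + 1) with h3 | h3
        · rw [tri0 n (j+2) hnd (by omega) (Or.inl (by omega))]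
          simp
        · rw [tri1 m n hmd hnd (Or.inl (by omega))]
          simp

end Master

section Words
variable (a : ℕ → F) {j : ℕ}

lemma square_expand (hj : j + 2 ≤ d) :
    Φ.Es j * (Φ.A * (Φ.A * Φ.Es (j + 2))) =
      ∑ m ∈ Finset.range (d + 1),
        Φ.Es j * (Φ.A * (Φ.Es m * (Φ.A * Φ.Es (j + 2)))) := by
  have ins : Φ.Es j * (Φ.A * (Φ.A * Φ.Es (j + 2))) =
      Φ.Es j * (Φ.A * ((1 : Module.End F V) * (Φ.A * Φ.Es (j + 2)))) := by
    rw [one_mul]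
  rw [ins, ← Φ.hEssum]
  simp only [Finset.mul_sum, Finset.sum_mul]

lemma cube_expand (hj : j + 2 ≤ d) :
    Φ.Es j * (Φ.A * (Φ.A * (Φ.A * Φ.Es (j + 2)))) =
      ∑ m ∈ Finset.range (d + 1), ∑ n ∈ Finset.range (d + 1),
        Φ.Es j * (Φ.A * (Φ.Es m * (Φ.A * (Φ.Es n * (Φ.A * Φ.Es (j + 2)))))) := by
  have ins : Φ.Es j * (Φ.A * (Φ.A * (Φ.A * Φ.Es (j + 2)))) =
      Φ.Es j * (Φ.A * ((1 : Module.End F V) * (Φ.A *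
        ((1 : Module.End F V) * (Φ.A * Φ.Es (j + 2)))))) := by
    rw [one_mul, one_mul]
  rw [ins, ← Φ.hEssum]
  simp only [Finset.mul_sum, Finset.sum_mul]
  rw [Finset.sum_comm]

variable (ha : ∀ i ≤ d, Φ.Es i * Φ.A * Φ.Es i = a i • Φ.Es i) (hj : j + 2 ≤ d)

include ha hj

lemma w_AAAS :
    Φ.Es j * (Φ.A * (Φ.A * (Φ.A * (Φ.As * Φ.Es (j + 2))))) =
      (Φ.θs (j+2) * a j + Φ.θs (j+2) * a (j+1) + Φ.θs (j+2) * a (j+2)) •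
        (Φ.Es j * (Φ.A * (Φ.Es (j+1) * (Φ.A * Φ.Es (j+2))))) := by
  rw [Φ.as_mul_es (by omega : j + 2 ≤ d)]
  simp only [mul_smul_comm]
  rw [Φ.cube_expand hj, Finset.smul_sum]
  simp only [Finset.smul_sum]
  exact Φ.double_master a ha hj (fun _ _ => Φ.θs (j+2))

lemma w_SAAA :
    Φ.Es j * (Φ.As * (Φ.A * (Φ.A * (Φ.A * Φ.Es (j + 2))))) =
      (Φ.θs j * a j + Φ.θs j * a (j+1) + Φ.θs j * a (j+2)) •
        (Φ.Es j * (Φ.A * (Φ.Es (j+1) * (Φ.A * Φ.Es (j+2))))) := by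
  rw [← mul_assoc, Φ.es_mul_as (by omega : j ≤ d), smul_mul_assoc]
  rw [Φ.cube_expand hj, Finset.smul_sum]
  simp only [Finset.smul_sum]
  exact Φ.double_master a ha hj (fun _ _ => Φ.θs j)

lemma w_AASA :
    Φ.Es j * (Φ.A * (Φ.A * (Φ.As * (Φ.A * Φ.Es (j + 2))))) =
      (Φ.θs (j+1) * a j + Φ.θs (j+1) * a (j+1) + Φ.θs (j+2) * a (j+2)) •
        (Φ.Es j * (Φ.A * (Φ.Es (j+1) * (Φ.A * Φ.Es (j+2))))) := by
  have ins : Φ.Es j * (Φ.A * (Φ.A * (Φ.As * (Φ.A * Φ.Es (j + 2))))) =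
      Φ.Es j * (Φ.A * ((1 : Module.End F V) * (Φ.A * (Φ.As * (Φ.A * Φ.Es (j + 2)))))) := by
    rw [one_mul]
  rw [ins, ← Φ.hEssum, Φ.hAs]
  simp only [Finset.mul_sum, Finset.sum_mul, smul_mul_assoc, mul_smul_comm, Finset.smul_sum]
  rw [Finset.sum_comm]
  exact Φ.double_master a ha hj (fun _ n => Φ.θs n)

lemma w_ASAA :
    Φ.Es j * (Φ.A * (Φ.As * (Φ.A * (Φ.A * Φ.Es (j + 2))))) =
      (Φ.θs j * a j + Φ.θs (j+1) * a (j+1) + Φ.θs (j+1) * a (j+2)) •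
        (Φ.Es j * (Φ.A * (Φ.Es (j+1) * (Φ.A * Φ.Es (j+2))))) := by
  have ins : Φ.Es j * (Φ.A * (Φ.As * (Φ.A * (Φ.A * Φ.Es (j + 2))))) =
      Φ.Es j * (Φ.A * (Φ.As * (Φ.A * ((1 : Module.End F V) * (Φ.A * Φ.Es (j + 2)))))) := by
    rw [one_mul]
  rw [ins, ← Φ.hEssum, Φ.hAs]
  simp only [Finset.mul_sum, Finset.sum_mul, smul_mul_assoc, mul_smul_comm, Finset.smul_sum]
  rw [Finset.sum_comm]
  exact Φ.double_master a ha hj (fun m _ => Φ.θs m)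

lemma w_AAS :
    Φ.Es j * (Φ.A * (Φ.A * (Φ.As * Φ.Es (j + 2)))) =
      Φ.θs (j+2) • (Φ.Es j * (Φ.A * (Φ.Es (j+1) * (Φ.A * Φ.Es (j+2))))) := by
  rw [Φ.as_mul_es (by omega : j + 2 ≤ d)]
  simp only [mul_smul_comm]
  rw [Φ.square_expand hj, Finset.smul_sum]
  exact Φ.single_master a ha hj (fun _ => Φ.θs (j+2))

lemma w_SAA :
    Φ.Es j * (Φ.As * (Φ.A * (Φ.A * Φ.Es (j + 2)))) =
      Φ.θs j • (Φ.Es j * (Φ.A * (Φ.Es (j+1) * (Φ.A * Φ.Es (j+2))))) := by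
  rw [← mul_assoc, Φ.es_mul_as (by omega : j ≤ d), smul_mul_assoc]
  rw [Φ.square_expand hj, Finset.smul_sum]
  exact Φ.single_master a ha hj (fun _ => Φ.θs j)

lemma w_ASA :
    Φ.Es j * (Φ.A * (Φ.As * (Φ.A * Φ.Es (j + 2)))) =
      Φ.θs (j+1) • (Φ.Es j * (Φ.A * (Φ.Es (j+1) * (Φ.A * Φ.Es (j+2))))) := by
  rw [Φ.hAs]
  simp only [Finset.mul_sum, Finset.sum_mul, smul_mul_assoc, mul_smul_comm]
  exact Φ.single_master a ha hj (fun m => Φ.θs m)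

lemma w_AS :
    Φ.Es j * (Φ.A * (Φ.As * Φ.Es (j + 2))) = 0 := by
  rw [Φ.as_mul_es (by omega : j + 2 ≤ d)]
  simp only [mul_smul_comm]
  have h0 : Φ.Es j * (Φ.A * Φ.Es (j + 2)) = 0 := by
    simpa [mul_assoc] using Φ.htri j (by omega) (j+2) (by omega) (Or.inl (by omega))
  rw [h0, smul_zero]

lemma w_SA :
    Φ.Es j * (Φ.As * (Φ.A * Φ.Es (j + 2))) = 0 := by
  rw [← mul_assoc, Φ.es_mul_as (by omega : j ≤ d), smul_mul_assoc]
  have h0 : Φ.Es j * (Φ.A * Φ.Es (j + 2)) = 0 := by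
    simpa [mul_assoc] using Φ.htri j (by omega) (j+2) (by omega) (Or.inl (by omega))
  rw [h0, smul_zero]

end Words

lemma key [FiniteDimensional F V]
    (hdimEs : ∀ i ≤ d, Module.finrank F (LinearMap.range (Φ.Es i)) = 1)
    (β γ ϱ : F) (a : ℕ → F)
    (hTD1 : Φ.A * (Φ.A ^ 2 * Φ.As - β • (Φ.A * Φ.As * Φ.A) + Φ.As * Φ.A ^ 2
          - γ • (Φ.A * Φ.As + Φ.As * Φ.A) - ϱ • Φ.As)
        - (Φ.A ^ 2 * Φ.As - β • (Φ.A * Φ.As * Φ.A) + Φ.As * Φ.A ^ 2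
          - γ • (Φ.A * Φ.As + Φ.As * Φ.A) - ϱ • Φ.As) * Φ.A = 0)
    (ha : ∀ i ≤ d, Φ.Es i * Φ.A * Φ.Es i = a i • Φ.Es i)
    {j : ℕ} (hj : j + 2 ≤ d) :
    (Φ.θs (j+2) - Φ.θs (j+1) + β * (Φ.θs j - Φ.θs (j+1))) * a j
      + (Φ.θs (j+2) - Φ.θs j) * a (j+1)
      + (Φ.θs (j+1) - Φ.θs j + β * (Φ.θs (j+1) - Φ.θs (j+2))) * a (j+2)
      = γ * (Φ.θs (j+2) - Φ.θs j) := by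
  set Q : Module.End F V := Φ.Es j * (Φ.A * (Φ.Es (j+1) * (Φ.A * Φ.Es (j+2)))) with hQdef
  have hQne : Q ≠ 0 := by
    have h := Φ.comp_ne hj hdimEs
    have hQB : (Φ.Es j * Φ.A * Φ.Es (j+1)) * (Φ.Es (j+1) * Φ.A * Φ.Es (j+2)) = Q := by
      rw [hQdef]
      simp only [mul_assoc]
      rw [← mul_assoc (Φ.Es (j+1)) (Φ.Es (j+1)), Φ.es_idem (by omega : j + 1 ≤ d)]
    rw [hQB] at h
    exact h
  have hsand := congrArg (fun X : Module.End F V => Φ.Es j * X * Φ.Es (j+2)) hTD1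
  simp only [mul_zero, zero_mul] at hsand
  have hexpand : Φ.Es j * (Φ.A * (Φ.A ^ 2 * Φ.As - β • (Φ.A * Φ.As * Φ.A) + Φ.As * Φ.A ^ 2
          - γ • (Φ.A * Φ.As + Φ.As * Φ.A) - ϱ • Φ.As)
        - (Φ.A ^ 2 * Φ.As - β • (Φ.A * Φ.As * Φ.A) + Φ.As * Φ.A ^ 2
          - γ • (Φ.A * Φ.As + Φ.As * Φ.A) - ϱ • Φ.As) * Φ.A) * Φ.Es (j+2)
      = ((Φ.θs (j+2) - Φ.θs (j+1) + β * (Φ.θs j - Φ.θs (j+1))) * a j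
          + (Φ.θs (j+2) - Φ.θs j) * a (j+1)
          + (Φ.θs (j+1) - Φ.θs j + β * (Φ.θs (j+1) - Φ.θs (j+2))) * a (j+2)
          - γ * (Φ.θs (j+2) - Φ.θs j)) • Q := by
    simp only [pow_two, mul_sub, sub_mul, mul_add, add_mul, smul_mul_assoc, mul_smul_comm,
      mul_assoc]
    rw [Φ.w_AAAS a ha hj, Φ.w_SAAA a ha hj, Φ.w_AASA a ha hj, Φ.w_ASAA a ha hj,
      Φ.w_AAS a ha hj, Φ.w_SAA a ha hj, Φ.w_ASA a ha hj, Φ.w_AS a ha hj, Φ.w_SA a ha hj]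
    rw [hQdef]
    module
  rw [hexpand] at hsand
  rcases smul_eq_zero.mp hsand with hc | hq
  · linear_combination hc
  · exact absurd hq hQne

end TDSystem

/-- For a Leonard system (all eigenspaces one-dimensional) with
tridiagonal-relation scalars `β, γ, ϱ` (and duals `γ*, ϱ*`), and the dual eigenvalue
sequence extended to indices `-1, d+1` via `γ* = θ*_{i-1} - β θ*_i + θ*_{i+1}`,
one has `g⁻_i a_{i-2} + a_{i-1} + g⁺_i a_i = γ` for `2 ≤ i ≤ d`, where
`g⁺_i = (θ*_i-θ*_{i+1})/(θ*_i-θ*_{i-2})`, `g⁻_i = (θ*_{i-2}-θ*_{i-3})/(θ*_{i-2}-θ*_i)`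
and `E*_k A E*_k = a_k E*_k`. -/
theorem stmt14 {F V : Type*} [Field F] [AddCommGroup V] [Module F V]
    [FiniteDimensional F V] [Nontrivial V] (d : ℕ) (hd : 1 ≤ d)
    (Φ : TDSystem F V d)
    (hdimE : ∀ i ≤ d, Module.finrank F (LinearMap.range (Φ.E i)) = 1)
    (hdimEs : ∀ i ≤ d, Module.finrank F (LinearMap.range (Φ.Es i)) = 1)
    (β γ γs ϱ ϱs : F) (t : ℤ → F) (a : ℕ → F)
    (ht : ∀ i : ℕ, i ≤ d → t i = Φ.θs i)
    (hext : ∀ i : ℤ, 0 ≤ i → i ≤ (d : ℤ) → γs = t (i - 1) - β * t i + t (i + 1))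
    (hTD1 : Φ.A * (Φ.A ^ 2 * Φ.As - β • (Φ.A * Φ.As * Φ.A) + Φ.As * Φ.A ^ 2
          - γ • (Φ.A * Φ.As + Φ.As * Φ.A) - ϱ • Φ.As)
        - (Φ.A ^ 2 * Φ.As - β • (Φ.A * Φ.As * Φ.A) + Φ.As * Φ.A ^ 2
          - γ • (Φ.A * Φ.As + Φ.As * Φ.A) - ϱ • Φ.As) * Φ.A = 0)
    (hTD2 : Φ.As * (Φ.As ^ 2 * Φ.A - β • (Φ.As * Φ.A * Φ.As) + Φ.A * Φ.As ^ 2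
          - γs • (Φ.As * Φ.A + Φ.A * Φ.As) - ϱs • Φ.A)
        - (Φ.As ^ 2 * Φ.A - β • (Φ.As * Φ.A * Φ.As) + Φ.A * Φ.As ^ 2
          - γs • (Φ.As * Φ.A + Φ.A * Φ.As) - ϱs • Φ.A) * Φ.As = 0)
    (ha : ∀ i ≤ d, Φ.Es i * Φ.A * Φ.Es i = a i • Φ.Es i) :
    ∀ i : ℕ, 2 ≤ i → i ≤ d →
      ((t ((i : ℤ) - 2) - t ((i : ℤ) - 3)) / (t ((i : ℤ) - 2) - t (i : ℤ))) * a (i - 2)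
        + a (i - 1)
        + ((t (i : ℤ) - t ((i : ℤ) + 1)) / (t (i : ℤ) - t ((i : ℤ) - 2))) * a i = γ := by
  intro i hi2 hid
  obtain ⟨j, rfl⟩ : ∃ j, i = j + 2 := ⟨i - 2, by omega⟩
  have hj : j + 2 ≤ d := hid
  have hkey := Φ.key hdimEs β γ ϱ a hTD1 ha hj
  have hn2 : j + 2 - 2 = j := by omega
  have hn1 : j + 2 - 1 = j + 1 := by omega
  rw [hn2, hn1]
  have e1 : ((j + 2 : ℕ) : ℤ) - 2 = (j : ℤ) := by push_cast; ring
  have e2 : ((j + 2 : ℕ) : ℤ) - 3 = (j : ℤ) - 1 := by push_cast; ring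
  have e3 : ((j + 2 : ℕ) : ℤ) + 1 = (j : ℤ) + 3 := by push_cast; ring
  have e4 : ((j + 2 : ℕ) : ℤ) = (j : ℤ) + 2 := by push_cast; ring
  rw [e1, e2, e3, e4]
  have ht0 : t (j : ℤ) = Φ.θs j := ht j (by omega)
  have ht1 : t ((j : ℤ) + 1) = Φ.θs (j + 1) := by
    have h := ht (j + 1) (by omega)
    rwa [show ((j + 1 : ℕ) : ℤ) = (j : ℤ) + 1 by push_cast; ring] at h
  have ht2 : t ((j : ℤ) + 2) = Φ.θs (j + 2) := by
    have h := ht (j + 2) (by omega)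
    rwa [e4] at h
  have g0 := hext (j : ℤ) (by positivity) (by omega)
  have g1 : γs = t (j : ℤ) - β * t ((j : ℤ) + 1) + t ((j : ℤ) + 2) := by
    have h := hext ((j : ℤ) + 1) (by positivity) (by omega)
    rwa [show ((j : ℤ) + 1) - 1 = (j : ℤ) by ring,
      show ((j : ℤ) + 1) + 1 = (j : ℤ) + 2 by ring] at h
  have g2 : γs = t ((j : ℤ) + 1) - β * t ((j : ℤ) + 2) + t ((j : ℤ) + 3) := by
    have h := hext ((j : ℤ) + 2) (by positivity) (by omega)
    rwa [show ((j : ℤ) + 2) - 1 = (j : ℤ) + 1 by ring,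
      show ((j : ℤ) + 2) + 1 = (j : ℤ) + 3 by ring] at h
  rw [ht0, ht1] at g0
  rw [ht0, ht1, ht2] at g1
  rw [ht1, ht2] at g2
  rw [ht0, ht2]
  have hnum1 : Φ.θs j - t ((j : ℤ) - 1)
      = -(Φ.θs (j+2) - Φ.θs (j+1) + β * (Φ.θs j - Φ.θs (j+1))) := by
    linear_combination g0 - g1
  have hnum2 : Φ.θs (j+2) - t ((j : ℤ) + 3)
      = Φ.θs (j+1) - Φ.θs j + β * (Φ.θs (j+1) - Φ.θs (j+2)) := by
    linear_combination g2 - g1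
  rw [hnum1, hnum2]
  have hne : Φ.θs j - Φ.θs (j + 2) ≠ 0 :=
    sub_ne_zero.mpr (Φ.hθs j (by omega) (j + 2) (by omega) (by omega))
  have hne' : Φ.θs (j + 2) - Φ.θs j ≠ 0 := fun h => hne (by linear_combination -h)
  field_simp
  linear_combination (Φ.θs j - Φ.θs (j + 2)) * hkey
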